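/- Fix α ∈ (0,1). The random time τ_BH := max{ t ∈ {1, …, n+m} : (m/(n+1)) · (1 + Σ_{s=1}^t B_s) / max(1, Σ_{s=1}^t (1 − B_s)) ≤ α } (with τ_BH := 0 if this set is empty) satisfies {τ_BH ≥ t} ∈ F_t for every t, i.e., τ_BH is a stopping time with respect to the reverse filtration (F_t)_{t=0}^{n+m}; consequently the variables e_1^{(τ_BH)}, …, e_m^{(τ_BH)} are e-values: E[e_i^{(τ_BH)} · 1{Y_{n+i} ≤ 0}] ≤ 1 for every i = 1, …, m. -/

import Mathlib

open MeasureTheory ProbabilityTheory Finset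
open scoped ENNReal

namespace ConfAux

variable {𝓧 : Type*}

/-- clipped score of slot `k` for data `v` (calibration slots `k < n` are clipped). -/
noncomputable def scoreF (n m : ℕ) (μhat : 𝓧 → ℝ) (v : Fin (n + m) → 𝓧 × ℝ)
    (k : Fin (n + m)) : EReal :=
  if (k : ℕ) < n ∧ 0 < (v k).2 then (⊤ : EReal) else ((-μhat (v k).1 : ℝ) : EReal)

def cBF (n m : ℕ) (π : Equiv.Perm (Fin (n + m))) (t : ℕ) : ℕ :=
  (Finset.univ.filter fun s : Fin (n + m) => (s : ℕ) < t ∧ (π s : ℕ) < n).card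

def NcalF (n m : ℕ) (π : Equiv.Perm (Fin (n + m))) (t : ℕ) : ℕ :=
  (Finset.univ.filter fun s : Fin (n + m) => t ≤ (s : ℕ) ∧ (π s : ℕ) < n).card

noncomputable def tauF (n m : ℕ) (α : ℝ) (π : Equiv.Perm (Fin (n + m))) : ℕ :=
  sSup {t : ℕ | 1 ≤ t ∧ t ≤ n + m ∧
    (m : ℝ) / ((n : ℝ) + 1) * (1 + (cBF n m π t : ℝ)) /
      max 1 ((t : ℝ) - (cBF n m π t : ℝ)) ≤ α}

noncomputable def WsF (n m : ℕ) (w : Fin (n + m) → EReal) (π : Equiv.Perm (Fin (n + m)))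
    (t : ℕ) : EReal :=
  if h : t - 1 < n + m ∧ 1 ≤ t then w (π ⟨t - 1, h.1⟩) else (⊥ : EReal)

/-- the stopped e-value (times the null indicator), as `ℝ≥0∞`, with explicit permutation. -/
noncomputable def gFP (n m : ℕ) (α : ℝ) (μhat : 𝓧 → ℝ) (p : Fin (n + m))
    (π : Equiv.Perm (Fin (n + m))) (v : Fin (n + m) → 𝓧 × ℝ) : ℝ≥0∞ :=
  ENNReal.ofReal ((((n : ℝ) + 1) *
      (if scoreF n m μhat v p ≤ WsF n m (scoreF n m μhat v) π (tauF n m α π) then (1:ℝ) else 0) /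
      (1 + (n : ℝ) - (NcalF n m π (tauF n m α π) : ℝ))) *
    (if (v p).2 ≤ 0 then (1:ℝ) else 0))

noncomputable def gF (n m : ℕ) (α : ℝ) (μhat : 𝓧 → ℝ) (p : Fin (n + m))
    (v : Fin (n + m) → 𝓧 × ℝ) : ℝ≥0∞ :=
  gFP n m α μhat p (Tuple.sort (scoreF n m μhat v)) v

lemma perm_apply_inv_self {N : ℕ} (σ : Equiv.Perm (Fin N)) (x : Fin N) : σ (σ⁻¹ x) = x :=
  σ.apply_symm_apply x

lemma perm_inv_apply_self {N : ℕ} (σ : Equiv.Perm (Fin N)) (x : Fin N) : σ⁻¹ (σ x) = x :=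
  σ.symm_apply_apply x

section SortLemmas

variable {N : ℕ} (w : Fin N → EReal)

lemma sort_mono : Monotone (fun s => w (Tuple.sort w s)) := Tuple.monotone_sort w

lemma sort_tie : ∀ s s' : Fin N, s < s' → w (Tuple.sort w s) = w (Tuple.sort w s') →
    Tuple.sort w s < Tuple.sort w s' :=
  (Tuple.eq_sort_iff.mp rfl).2

lemma sort_char {σ : Equiv.Perm (Fin N)}
    (h : ∀ s s' : Fin N, s < s' → w (σ s) < w (σ s') ∨
      (w (σ s) = w (σ s') ∧ (σ s : ℕ) < (σ s' : ℕ))) : σ = Tuple.sort w := by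
  rw [Tuple.eq_sort_iff]
  constructor
  · intro s s' hss
    rcases hss.eq_or_lt with h' | h'
    · exact le_of_eq (by rw [h'])
    · rcases h s s' h' with h'' | h''
      · exact h''.le
      · exact h''.1.le
  · intro s s' hss heq
    rcases h s s' hss with h'' | h''
    · exact absurd heq h''.ne
    · exact h''.2

lemma card_filter_perm {P : Fin N → Prop} [DecidablePred P] (π : Equiv.Perm (Fin N)) :
    (Finset.univ.filter fun s => P (π s)).card = (Finset.univ.filter P).card := by
  refine Finset.card_bij (fun s _ => π s) ?_ ?_ ?_
  · intro s hs; simp only [Finset.mem_filter, Finset.mem_univ, true_and] at hs ⊢; exact hs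
  · intro a _ b _ hab; exact π.injective hab
  · intro k hk
    refine ⟨π.symm k, ?_, by simp⟩
    simp only [Finset.mem_filter, Finset.mem_univ, true_and, Equiv.apply_symm_apply] at hk ⊢
    exact hk

lemma card_filter_val_lt (t : ℕ) :
    (Finset.univ.filter fun s : Fin N => (s : ℕ) < t).card = min t N := by
  have h : (Finset.univ.filter fun s : Fin N => (s : ℕ) < t).image Fin.val
      = Finset.range (min t N) := by
    ext a
    simp only [Finset.mem_image, Finset.mem_filter, Finset.mem_univ, true_and,
      Finset.mem_range, lt_min_iff]
    constructor
    · rintro ⟨k, hk, rfl⟩; exact ⟨hk, k.isLt⟩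
    · rintro ⟨h1, h2⟩; exact ⟨⟨a, h2⟩, h1, rfl⟩
  have := congrArg Finset.card h
  rwa [Finset.card_image_of_injective _ Fin.val_injective, Finset.card_range] at this

/-- the sorted position of a slot whose value is not attained elsewhere is the number of
slots with strictly smaller value. -/
lemma rank_eq (k : Fin N) (hk : ∀ k', w k' = w k → k' = k) :
    (((Tuple.sort w)⁻¹ k : Fin N) : ℕ) = (Finset.univ.filter fun k' => w k' < w k).card := by
  have hks : Tuple.sort w ((Tuple.sort w)⁻¹ k) = k := perm_apply_inv_self _ k
  have key : ∀ s' : Fin N, s' < (Tuple.sort w)⁻¹ k ↔ w (Tuple.sort w s') < w k := by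
    intro s'
    constructor
    · intro h
      rcases (sort_mono w h.le).lt_or_eq with h' | h'
      · simpa only [hks] using h'
      · exfalso
        have h2 : Tuple.sort w s' = k := hk _ (by simpa only [hks] using h')
        have := (Tuple.sort w).injective (h2.trans hks.symm)
        exact absurd this h.ne
    · intro h
      by_contra hc
      push_neg at hc
      have h2 : w k ≤ w (Tuple.sort w s') := by
        have := sort_mono w hc
        simpa only [hks] using this
      exact absurd (h2.trans_lt h) (lt_irrefl _)
  have hcard : (Finset.univ.filter fun s' : Fin N => s' < (Tuple.sort w)⁻¹ k).card
      = (Finset.univ.filter fun k' => w k' < w k).card := by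
    refine Finset.card_bij (fun s' _ => Tuple.sort w s') ?_ ?_ ?_
    · intro s' hs'
      simp only [Finset.mem_filter, Finset.mem_univ, true_and] at hs' ⊢
      exact (key s').mp hs'
    · intro a _ b _ hab; exact (Tuple.sort w).injective hab
    · intro k' hk'
      simp only [Finset.mem_filter, Finset.mem_univ, true_and] at hk'
      refine ⟨(Tuple.sort w)⁻¹ k', ?_, by simp⟩
      simp only [Finset.mem_filter, Finset.mem_univ, true_and]
      rw [key]
      simpa using hk'
  rw [← hcard]
  have hIio : (Finset.univ.filter fun s' : Fin N => s' < (Tuple.sort w)⁻¹ k) =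
      Finset.Iio ((Tuple.sort w)⁻¹ k) := by
    ext k'; simp [Finset.mem_Iio]
  rw [hIio, Fin.card_Iio]

end SortLemmas


section Det

variable {𝓧 : Type*} (n m : ℕ) (α : ℝ) (μhat : 𝓧 → ℝ)

lemma tauF_le (π : Equiv.Perm (Fin (n + m))) : tauF n m α π ≤ n + m := by
  unfold tauF
  rcases Set.eq_empty_or_nonempty {t : ℕ | 1 ≤ t ∧ t ≤ n + m ∧
      (m : ℝ) / ((n : ℝ) + 1) * (1 + (cBF n m π t : ℝ)) /
        max 1 ((t : ℝ) - (cBF n m π t : ℝ)) ≤ α} with h | h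
  · rw [h]; simp
  · exact (Nat.sSup_mem h ⟨n + m, fun x hx => hx.2.1⟩).2.1

lemma tauF_mem (π : Equiv.Perm (Fin (n + m))) (h : tauF n m α π ≠ 0) :
    1 ≤ tauF n m α π ∧ tauF n m α π ≤ n + m ∧
      (m : ℝ) / ((n : ℝ) + 1) * (1 + (cBF n m π (tauF n m α π) : ℝ)) /
        max 1 ((tauF n m α π : ℝ) - (cBF n m π (tauF n m α π) : ℝ)) ≤ α := by
  unfold tauF at h ⊢
  rcases Set.eq_empty_or_nonempty {t : ℕ | 1 ≤ t ∧ t ≤ n + m ∧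
      (m : ℝ) / ((n : ℝ) + 1) * (1 + (cBF n m π t : ℝ)) /
        max 1 ((t : ℝ) - (cBF n m π t : ℝ)) ≤ α} with he | he
  · exfalso; rw [he] at h; simp at h
  · exact Nat.sSup_mem he ⟨n + m, fun x hx => hx.2.1⟩

lemma le_tauF (π : Equiv.Perm (Fin (n + m))) (t : ℕ) (h1 : 1 ≤ t) (h2 : t ≤ n + m)
    (h3 : (m : ℝ) / ((n : ℝ) + 1) * (1 + (cBF n m π t : ℝ)) /
        max 1 ((t : ℝ) - (cBF n m π t : ℝ)) ≤ α) : t ≤ tauF n m α π :=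
  le_csSup ⟨n + m, fun x hx => hx.2.1⟩ ⟨h1, h2, h3⟩

lemma cBF_add_NcalF (π : Equiv.Perm (Fin (n + m))) (t : ℕ) (hm : 1 ≤ m) :
    cBF n m π t + NcalF n m π t = n := by
  classical
  have hsplit := Finset.card_filter_add_card_filter_not
    (s := Finset.univ.filter fun s : Fin (n + m) => (π s : ℕ) < n)
    (p := fun s : Fin (n + m) => (s : ℕ) < t)
  have h1 : (Finset.univ.filter fun s : Fin (n + m) => (π s : ℕ) < n).filter
      (fun s : Fin (n + m) => (s : ℕ) < t) = Finset.univ.filter fun s : Fin (n + m) =>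
        (s : ℕ) < t ∧ (π s : ℕ) < n := by
    rw [Finset.filter_filter]; apply Finset.filter_congr; intro s _; tauto
  have h2 : (Finset.univ.filter fun s : Fin (n + m) => (π s : ℕ) < n).filter
      (fun s : Fin (n + m) => ¬ (s : ℕ) < t) = Finset.univ.filter fun s : Fin (n + m) =>
        t ≤ (s : ℕ) ∧ (π s : ℕ) < n := by
    rw [Finset.filter_filter]; apply Finset.filter_congr; intro s _
    simp only [not_lt]; tauto
  have h3 : (Finset.univ.filter fun s : Fin (n + m) => (π s : ℕ) < n).card = n := by
    have := card_filter_perm (P := fun k : Fin (n + m) => (k : ℕ) < n) π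
    rw [this, card_filter_val_lt]
    omega
  rw [h1, h2] at hsplit
  unfold cBF NcalF
  rw [hsplit, h3]


theorem det_core (hm : 1 ≤ m) (v : Fin (n + m) → 𝓧 × ℝ)
    (hv : ∀ k k' : Fin (n + m), k ≠ k' → μhat (v k).1 ≠ μhat (v k').1)
    (p : Fin (n + m)) (hp : n ≤ (p : ℕ)) :
    ∑ j ∈ Finset.univ.filter (fun k : Fin (n + m) => (k : ℕ) < n ∨ k = p),
      gF n m α μhat p (v ∘ (Equiv.swap j p)) ≤ ((n : ℝ≥0∞) + 1) := by
  classical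
  set C : Finset (Fin (n + m)) :=
    Finset.univ.filter (fun k : Fin (n + m) => (k : ℕ) < n ∨ k = p) with hC
  set vt : Fin (n + m) → EReal := fun k =>
    if ((k : ℕ) < n ∨ k = p) ∧ 0 < (v k).2 then (⊤ : EReal)
    else ((-μhat (v k).1 : ℝ) : EReal) with hvt
  have hvtcoe : ∀ k, vt k ≠ ⊤ → vt k = ((-μhat (v k).1 : ℝ) : EReal) := by
    intro k hk
    by_cases h : ((k : ℕ) < n ∨ k = p) ∧ 0 < (v k).2
    · exact absurd (if_pos h) hk
    · exact if_neg h
  have hvt_ne : ∀ k k' : Fin (n + m), k ≠ k' → vt k ≠ ⊤ → vt k' ≠ vt k := by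
    intro k k' hne hk
    rw [hvtcoe k hk]
    by_cases h' : vt k' = ⊤
    · rw [h']; exact (EReal.coe_ne_top _).symm
    · rw [hvtcoe k' h']
      intro hc
      exact hv k' k (Ne.symm hne) (neg_inj.mp (EReal.coe_injective hc))
  have hvtne_top : ∀ k : Fin (n + m), (v k).2 ≤ 0 → vt k ≠ ⊤ := by
    intro k hy
    rw [show vt k = if ((k : ℕ) < n ∨ k = p) ∧ 0 < (v k).2 then (⊤ : EReal)
      else ((-μhat (v k).1 : ℝ) : EReal) from rfl]
    rw [if_neg (by rintro ⟨-, h2⟩; exact absurd h2 (not_lt.mpr hy))]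
    exact EReal.coe_ne_top _
  have hvtne_top' : ∀ k : Fin (n + m), ¬ ((k : ℕ) < n ∨ k = p) → vt k ≠ ⊤ := by
    intro k hk
    rw [show vt k = if ((k : ℕ) < n ∨ k = p) ∧ 0 < (v k).2 then (⊤ : EReal)
      else ((-μhat (v k).1 : ℝ) : EReal) from rfl]
    rw [if_neg (by rintro ⟨h1, -⟩; exact hk h1)]
    exact EReal.coe_ne_top _
  set ρ : EReal → ℕ := fun c => (Finset.univ.filter fun k => vt k < c).card with hρ
  have hρlt : ∀ k k' : Fin (n + m), vt k < vt k' → ρ (vt k) < ρ (vt k') := by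
    intro k k' hlt
    apply Finset.card_lt_card
    rw [Finset.ssubset_iff_of_subset]
    · refine ⟨k, ?_, ?_⟩
      · simp only [Finset.mem_filter, Finset.mem_univ, true_and]; exact hlt
      · simp only [Finset.mem_filter, Finset.mem_univ, true_and]; exact lt_irrefl _
    · intro x hx
      simp only [Finset.mem_filter, Finset.mem_univ, true_and] at hx ⊢
      exact hx.trans hlt
  have hρinj : ∀ k k' : Fin (n + m), k ≠ k' → vt k ≠ ⊤ → vt k' ≠ ⊤ →
      ρ (vt k) ≠ ρ (vt k') := by
    intro k k' hne hk hk'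
    rcases lt_trichotomy (vt k) (vt k') with h | h | h
    · exact (hρlt _ _ h).ne
    · exact absurd h.symm (hvt_ne k k' hne hk)
    · exact (hρlt _ _ h).ne'
  have hescore : ∀ j, j ∈ C → (v j).2 ≤ 0 →
      scoreF n m μhat (v ∘ Equiv.swap j p) = fun k => vt (Equiv.swap j p k) := by
    intro j hj hy
    have hjC : (j : ℕ) < n ∨ j = p := by
      rw [hC] at hj; simpa using hj
    funext k
    show (if (k : ℕ) < n ∧ 0 < ((v ∘ Equiv.swap j p) k).2 then (⊤ : EReal)
      else ((-μhat ((v ∘ Equiv.swap j p) k).1 : ℝ) : EReal)) = _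
    rw [show vt (Equiv.swap j p k) = if ((Equiv.swap j p k : ℕ) < n ∨ Equiv.swap j p k = p)
        ∧ 0 < (v (Equiv.swap j p k)).2 then (⊤ : EReal)
      else ((-μhat (v (Equiv.swap j p k)).1 : ℝ) : EReal) from rfl]
    simp only [Function.comp_apply]
    refine if_congr ?_ rfl rfl
    by_cases hkj : k = j
    · subst hkj
      rw [Equiv.swap_apply_left]
      constructor
      · rintro ⟨-, h2⟩; exact ⟨Or.inr rfl, h2⟩
      · rintro ⟨-, h2⟩
        rcases hjC with hj' | hj'
        · exact ⟨hj', h2⟩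
        · rw [hj'] at hy; exact absurd h2 (not_lt.mpr hy)
    · by_cases hkp : k = p
      · subst hkp
        rw [Equiv.swap_apply_right]
        constructor
        · rintro ⟨h1, -⟩; exact absurd h1 (not_lt.mpr hp)
        · rintro ⟨-, h2⟩; exact absurd h2 (not_lt.mpr hy)
      · rw [Equiv.swap_apply_of_ne_of_ne hkj hkp]
        constructor
        · rintro ⟨h1, h2⟩; exact ⟨Or.inl h1, h2⟩
        · rintro ⟨h1, h2⟩
          rcases h1 with h1 | h1
          · exact ⟨h1, h2⟩
          · exact absurd h1 hkp
  have hrank : ∀ j k : Fin (n + m), vt (Equiv.swap j p k) ≠ ⊤ →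
      (((Tuple.sort (fun k => vt (Equiv.swap j p k)))⁻¹ k : Fin (n + m)) : ℕ) = ρ (vt (Equiv.swap j p k)) := by
    intro j k hk
    have h1 := rank_eq (fun k => vt (Equiv.swap j p k)) k ?_
    · rw [h1]
      exact card_filter_perm (P := fun x => vt x < vt (Equiv.swap j p k)) (Equiv.swap j p)
    · intro k' hk'
      by_contra hne
      have hne2 : Equiv.swap j p k ≠ Equiv.swap j p k' :=
        fun h => hne ((Equiv.injective _ h).symm)
      exact hvt_ne _ _ hne2 hk hk'
  set St : ℕ → ℕ := fun t => (Finset.univ.filter fun k : Fin (n + m) =>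
    ¬ ((k : ℕ) < n ∨ k = p) ∧ ρ (vt k) < t).card with hStdef
  have hcount : ∀ j, j ∈ C → (v j).2 ≤ 0 → ∀ t : ℕ,
      cBF n m (Tuple.sort (fun k => vt (Equiv.swap j p k))) t + St t + (if ρ (vt j) < t then 1 else 0) = min t (n + m) := by
    intro j hj hy t
    have hjC : (j : ℕ) < n ∨ j = p := by rw [hC] at hj; simpa using hj
    have htot : (Finset.univ.filter fun k : Fin (n + m) =>
        (((Tuple.sort (fun k => vt (Equiv.swap j p k)))⁻¹ k : Fin (n + m)) : ℕ) < t).card = min t (n + m) := by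
      have := card_filter_perm (P := fun s : Fin (n + m) => (s : ℕ) < t)
        ((Tuple.sort (fun k => vt (Equiv.swap j p k)))⁻¹ : Equiv.Perm (Fin (n + m)))
      rw [this, card_filter_val_lt]
    have hsplit1 := Finset.card_filter_add_card_filter_not
      (s := Finset.univ.filter fun k : Fin (n + m) => (((Tuple.sort (fun k => vt (Equiv.swap j p k)))⁻¹ k : Fin (n + m)) : ℕ) < t)
      (p := fun k : Fin (n + m) => (k : ℕ) < n)
    have hsplit2 := Finset.card_filter_add_card_filter_not
      (s := (Finset.univ.filter fun k : Fin (n + m) =>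
        (((Tuple.sort (fun k => vt (Equiv.swap j p k)))⁻¹ k : Fin (n + m)) : ℕ) < t).filter fun k : Fin (n + m) => ¬ (k : ℕ) < n)
      (p := fun k : Fin (n + m) => k = p)
    have hA1 : ((Finset.univ.filter fun k : Fin (n + m) =>
        (((Tuple.sort (fun k => vt (Equiv.swap j p k)))⁻¹ k : Fin (n + m)) : ℕ) < t).filter fun k : Fin (n + m) => (k : ℕ) < n).card
        = cBF n m (Tuple.sort (fun k => vt (Equiv.swap j p k))) t := by
      rw [Finset.filter_filter]
      unfold cBF
      have hcfp := card_filter_perm (P := fun k : Fin (n + m) =>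
        (((Tuple.sort (fun k => vt (Equiv.swap j p k)))⁻¹ k : Fin (n + m)) : ℕ) < t ∧ (k : ℕ) < n) (Tuple.sort (fun k => vt (Equiv.swap j p k)))
      rw [← hcfp]
      congr 1
      apply Finset.filter_congr
      intro s _
      simp [perm_inv_apply_self]
    have hrp : (((Tuple.sort (fun k => vt (Equiv.swap j p k)))⁻¹ p : Fin (n + m)) : ℕ) = ρ (vt j) := by
      have := hrank j p (by rw [Equiv.swap_apply_right]; exact hvtne_top j hy)
      rwa [Equiv.swap_apply_right] at this
    have hA3 : (((Finset.univ.filter fun k : Fin (n + m) =>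
        (((Tuple.sort (fun k => vt (Equiv.swap j p k)))⁻¹ k : Fin (n + m)) : ℕ) < t).filter fun k : Fin (n + m) =>
          ¬ (k : ℕ) < n).filter fun k : Fin (n + m) => k = p).card
        = (if ρ (vt j) < t then 1 else 0) := by
      rw [Finset.filter_filter, Finset.filter_filter]
      by_cases hρt : ρ (vt j) < t
      · rw [if_pos hρt]
        have hset : (Finset.univ.filter fun k : Fin (n + m) =>
            (((Tuple.sort (fun k => vt (Equiv.swap j p k)))⁻¹ k : Fin (n + m)) : ℕ) < t ∧ ¬ (k : ℕ) < n ∧ k = p) = {p} := by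
          ext k
          simp only [Finset.mem_filter, Finset.mem_univ, true_and, Finset.mem_singleton]
          constructor
          · rintro ⟨-, -, h3⟩; exact h3
          · rintro rfl
            exact ⟨by rw [hrp]; exact hρt, not_lt.mpr hp, rfl⟩
        rw [hset, Finset.card_singleton]
      · rw [if_neg hρt]
        have hset : (Finset.univ.filter fun k : Fin (n + m) =>
            (((Tuple.sort (fun k => vt (Equiv.swap j p k)))⁻¹ k : Fin (n + m)) : ℕ) < t ∧ ¬ (k : ℕ) < n ∧ k = p) = ∅ := by
          ext k
          simp only [Finset.mem_filter, Finset.mem_univ, true_and, Finset.notMem_empty,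
            iff_false]
          rintro ⟨h1, -, rfl⟩
          rw [hrp] at h1
          exact hρt h1
        rw [hset, Finset.card_empty]
    have hA2 : (((Finset.univ.filter fun k : Fin (n + m) =>
        (((Tuple.sort (fun k => vt (Equiv.swap j p k)))⁻¹ k : Fin (n + m)) : ℕ) < t).filter fun k : Fin (n + m) =>
          ¬ (k : ℕ) < n).filter fun k : Fin (n + m) => ¬ k = p).card = St t := by
      rw [Finset.filter_filter, Finset.filter_filter]
      rw [show St t = (Finset.univ.filter fun k : Fin (n + m) =>
        ¬ ((k : ℕ) < n ∨ k = p) ∧ ρ (vt k) < t).card from rfl]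
      congr 1
      apply Finset.filter_congr
      intro k _
      constructor
      · rintro ⟨h1, h2, h3⟩
        have hknp : ¬ ((k : ℕ) < n ∨ k = p) := by tauto
        have hkj : k ≠ j := by
          intro h; rw [h] at hknp; exact hknp hjC
        have hswap : Equiv.swap j p k = k := Equiv.swap_apply_of_ne_of_ne hkj h3
        have hr := hrank j k (by rw [hswap]; exact hvtne_top' k hknp)
        rw [hswap] at hr
        rw [hr] at h1
        exact ⟨hknp, h1⟩
      · rintro ⟨h1, h2⟩
        have hkj : k ≠ j := by
          intro h; rw [h] at h1; exact h1 hjC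
        have hkp : k ≠ p := fun h => h1 (Or.inr h)
        have hswap : Equiv.swap j p k = k := Equiv.swap_apply_of_ne_of_ne hkj hkp
        have hr := hrank j k (by rw [hswap]; exact hvtne_top' k h1)
        rw [hswap] at hr
        exact ⟨by rw [hr]; exact h2, fun h => h1 (Or.inl h), hkp⟩
    rw [hA1] at hsplit1
    rw [hA3, hA2] at hsplit2
    rw [htot] at hsplit1
    omega
  have hind : ∀ j, j ∈ C → (v j).2 ≤ 0 →
      ((vt j ≤ WsF n m (fun k => vt (Equiv.swap j p k)) (Tuple.sort (fun k => vt (Equiv.swap j p k))) (tauF n m α (Tuple.sort (fun k => vt (Equiv.swap j p k))))) ↔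
        ρ (vt j) < tauF n m α (Tuple.sort (fun k => vt (Equiv.swap j p k)))) := by
    intro j hj hy
    have htop : vt j ≠ ⊤ := hvtne_top j hy
    have hrp : (((Tuple.sort (fun k => vt (Equiv.swap j p k)))⁻¹ p : Fin (n + m)) : ℕ) = ρ (vt j) := by
      have := hrank j p (by rw [Equiv.swap_apply_right]; exact htop)
      rwa [Equiv.swap_apply_right] at this
    have hle : tauF n m α (Tuple.sort (fun k => vt (Equiv.swap j p k))) ≤ n + m := tauF_le n m α (Tuple.sort (fun k => vt (Equiv.swap j p k)))
    obtain ⟨T, hT⟩ : ∃ T, tauF n m α (Tuple.sort (fun k => vt (Equiv.swap j p k))) = T := ⟨_, rfl⟩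
    rw [hT] at hle ⊢
    rcases Nat.eq_zero_or_pos T with h0 | h1
    · subst h0
      unfold WsF
      rw [dif_neg (by omega)]
      constructor
      · intro h
        exfalso
        have hbot : vt j = ⊥ := le_bot_iff.mp h
        rw [hvtcoe j htop] at hbot
        exact EReal.coe_ne_bot _ hbot
      · intro h; omega
    · have h2 : T - 1 < n + m := by omega
      unfold WsF
      rw [dif_pos ⟨h2, h1⟩]
      constructor
      · intro hle'
        by_contra hc
        push_neg at hc
        have hfin : (⟨T - 1, h2⟩ : Fin (n + m)) < (Tuple.sort (fun k => vt (Equiv.swap j p k)))⁻¹ p := by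
          rw [Fin.lt_iff_val_lt_val, hrp]
          show T - 1 < ρ (vt j)
          omega
        have hmono := sort_mono (fun k => vt (Equiv.swap j p k)) hfin.le
        simp only [] at hmono
        rw [perm_apply_inv_self, Equiv.swap_apply_right] at hmono
        have heq : vt (Equiv.swap j p ((Tuple.sort (fun k => vt (Equiv.swap j p k))) ⟨T - 1, h2⟩)) = vt j :=
          le_antisymm hmono hle'
        by_cases hkj : Equiv.swap j p ((Tuple.sort (fun k => vt (Equiv.swap j p k))) ⟨T - 1, h2⟩) = j
        · have hsp : (Tuple.sort (fun k => vt (Equiv.swap j p k))) ⟨T - 1, h2⟩ = p := by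
            have hcc := congrArg (Equiv.swap j p) hkj
            rwa [Equiv.swap_apply_self, Equiv.swap_apply_left] at hcc
          have hq1 := congrArg (fun x => ((Tuple.sort (fun k => vt (Equiv.swap j p k)))⁻¹ :
            Equiv.Perm (Fin (n + m))) x) hsp
          simp only [perm_inv_apply_self] at hq1
          have hq2 : T - 1 = ρ (vt j) := by rw [← hrp, ← hq1]
          omega
        · exact absurd heq (hvt_ne j _ (Ne.symm hkj) htop)
      · intro hq'
        have hfin : ((Tuple.sort (fun k => vt (Equiv.swap j p k)))⁻¹ p : Fin (n + m)) ≤ (⟨T - 1, h2⟩ : Fin (n + m)) := by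
          rw [Fin.le_iff_val_le_val, hrp]
          show ρ (vt j) ≤ T - 1
          omega
        have hmono := sort_mono (fun k => vt (Equiv.swap j p k)) hfin
        simp only [] at hmono
        rwa [perm_apply_inv_self, Equiv.swap_apply_right] at hmono
  set val : Fin (n + m) → ℝ≥0∞ := fun j =>
    if (v j).2 ≤ 0 ∧ ρ (vt j) < tauF n m α (Tuple.sort (fun k => vt (Equiv.swap j p k))) then
      ENNReal.ofReal (((n : ℝ) + 1) / (1 + (cBF n m (Tuple.sort (fun k => vt (Equiv.swap j p k))) (tauF n m α (Tuple.sort (fun k => vt (Equiv.swap j p k)))) : ℝ))) else 0 with hval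
  have hterm : ∀ j ∈ C, gF n m α μhat p (v ∘ Equiv.swap j p) = val j := by
    intro j hj
    by_cases hy : (v j).2 ≤ 0
    · have hsc := hescore j hj hy
      unfold gF gFP
      rw [hsc]
      have hyp : ((v ∘ Equiv.swap j p) p).2 ≤ 0 := by
        simp only [Function.comp_apply, Equiv.swap_apply_right]; exact hy
      rw [if_pos hyp, mul_one]
      have hden : (1 + (n : ℝ) - (NcalF n m (Tuple.sort (fun k => vt (Equiv.swap j p k))) (tauF n m α (Tuple.sort (fun k => vt (Equiv.swap j p k)))) : ℝ))
          = 1 + (cBF n m (Tuple.sort (fun k => vt (Equiv.swap j p k))) (tauF n m α (Tuple.sort (fun k => vt (Equiv.swap j p k)))) : ℝ) := by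
        have hcn := cBF_add_NcalF n m (Tuple.sort (fun k => vt (Equiv.swap j p k))) (tauF n m α (Tuple.sort (fun k => vt (Equiv.swap j p k)))) hm
        have hcast : (NcalF n m (Tuple.sort (fun k => vt (Equiv.swap j p k))) (tauF n m α (Tuple.sort (fun k => vt (Equiv.swap j p k)))) : ℝ)
            = (n : ℝ) - (cBF n m (Tuple.sort (fun k => vt (Equiv.swap j p k))) (tauF n m α (Tuple.sort (fun k => vt (Equiv.swap j p k)))) : ℝ) := by
          have hcast2 := congrArg (fun x : ℕ => (x : ℝ)) hcn
          push_cast at hcast2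
          linarith
        rw [hcast]
        ring
      rw [hden]
      have hindic : (if vt (Equiv.swap j p p) ≤ WsF n m (fun k => vt (Equiv.swap j p k))
          (Tuple.sort (fun k => vt (Equiv.swap j p k))) (tauF n m α (Tuple.sort (fun k => vt (Equiv.swap j p k)))) then (1:ℝ) else 0) = (if ρ (vt j) < tauF n m α (Tuple.sort (fun k => vt (Equiv.swap j p k))) then (1:ℝ) else 0) := by
        refine if_congr ?_ rfl rfl
        rw [Equiv.swap_apply_right]
        exact hind j hj hy
      rw [hindic]
      rw [show val j = if (v j).2 ≤ 0 ∧ ρ (vt j) < tauF n m α (Tuple.sort (fun k => vt (Equiv.swap j p k))) then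
        ENNReal.ofReal (((n : ℝ) + 1) / (1 + (cBF n m (Tuple.sort (fun k => vt (Equiv.swap j p k))) (tauF n m α (Tuple.sort (fun k => vt (Equiv.swap j p k)))) : ℝ))) else 0 from rfl]
      by_cases hqj : ρ (vt j) < tauF n m α (Tuple.sort (fun k => vt (Equiv.swap j p k)))
      · rw [if_pos hqj, mul_one, if_pos ⟨hy, hqj⟩]
      · rw [if_neg hqj, mul_zero, zero_div, ENNReal.ofReal_zero, if_neg (by tauto)]
    · unfold gF gFP
      have hyp : ¬ ((v ∘ Equiv.swap j p) p).2 ≤ 0 := by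
        simp only [Function.comp_apply, Equiv.swap_apply_right]; exact hy
      rw [if_neg hyp, mul_zero, ENNReal.ofReal_zero]
      rw [show val j = if (v j).2 ≤ 0 ∧ ρ (vt j) < tauF n m α (Tuple.sort (fun k => vt (Equiv.swap j p k))) then
        ENNReal.ofReal (((n : ℝ) + 1) / (1 + (cBF n m (Tuple.sort (fun k => vt (Equiv.swap j p k))) (tauF n m α (Tuple.sort (fun k => vt (Equiv.swap j p k)))) : ℝ))) else 0 from rfl]
      rw [if_neg (by tauto)]
  rw [Finset.sum_congr rfl hterm]
  set A' : Finset (Fin (n + m)) :=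
    C.filter (fun j => (v j).2 ≤ 0 ∧ ρ (vt j) < tauF n m α (Tuple.sort (fun k => vt (Equiv.swap j p k)))) with hA'def
  have hsum : ∑ j ∈ C, val j = ∑ j ∈ A', val j := by
    refine (Finset.sum_subset (Finset.filter_subset _ _) ?_).symm
    intro x hx hnx
    rw [show val x = if (v x).2 ≤ 0 ∧ ρ (vt x) < tauF n m α
      (Tuple.sort (fun k => vt (Equiv.swap x p k))) then
      ENNReal.ofReal (((n : ℝ) + 1) / (1 + (cBF n m
        (Tuple.sort (fun k => vt (Equiv.swap x p k))) (tauF n m α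
          (Tuple.sort (fun k => vt (Equiv.swap x p k)))) : ℝ))) else 0 from rfl]
    rw [if_neg]
    intro hcond
    exact hnx (Finset.mem_filter.mpr ⟨hx, hcond⟩)
  rw [hsum]
  have hmemA' : ∀ j ∈ A', j ∈ C ∧ (v j).2 ≤ 0 ∧ ρ (vt j) < tauF n m α (Tuple.sort (fun k => vt (Equiv.swap j p k))) := by
    intro j hj
    rw [hA'def] at hj
    have hmf := Finset.mem_filter.mp hj
    exact ⟨hmf.1, hmf.2⟩
  rcases A'.eq_empty_or_nonempty with hAe | ⟨j₀, hj₀⟩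
  · rw [hAe]
    simp
  have hτle2 : ∀ j ∈ A', ∀ j' ∈ A', tauF n m α (Tuple.sort (fun k => vt (Equiv.swap j p k))) ≤ tauF n m α
      (Tuple.sort (fun k => vt (Equiv.swap j' p k))) := by
    intro j hj j' hj'
    by_contra hlt
    push_neg at hlt
    obtain ⟨hjC, hjy, hjq⟩ := hmemA' j hj
    obtain ⟨hjC', hjy', hjq'⟩ := hmemA' j' hj'
    obtain ⟨ht1, ht2, ht3⟩ := tauF_mem n m α (Tuple.sort (fun k => vt (Equiv.swap j p k))) (by omega)
    have hc1 := hcount j hjC hjy (tauF n m α (Tuple.sort (fun k => vt (Equiv.swap j p k))))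
    have hc2 := hcount j' hjC' hjy' (tauF n m α (Tuple.sort (fun k => vt (Equiv.swap j p k))))
    rw [if_pos hjq] at hc1
    rw [if_pos (by omega)] at hc2
    have hcbeq : cBF n m (Tuple.sort (fun k => vt (Equiv.swap j p k))) (tauF n m α (Tuple.sort (fun k => vt (Equiv.swap j p k)))) = cBF n m
        (Tuple.sort (fun k => vt (Equiv.swap j' p k))) (tauF n m α (Tuple.sort (fun k => vt (Equiv.swap j p k)))) := by omega
    have hle' := le_tauF n m α (Tuple.sort (fun k => vt (Equiv.swap j' p k))) (tauF n m α (Tuple.sort (fun k => vt (Equiv.swap j p k))))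
      ht1 ht2 (by rw [← hcbeq]; exact ht3)
    omega
  obtain ⟨hj₀C, hj₀y, hj₀q⟩ := hmemA' j₀ hj₀
  have hτeq : ∀ j ∈ A', tauF n m α (Tuple.sort (fun k => vt (Equiv.swap j p k))) = tauF n m α (Tuple.sort (fun k => vt (Equiv.swap j₀ p k))) := by
    intro j hj
    exact le_antisymm (hτle2 j hj j₀ hj₀) (hτle2 j₀ hj₀ j hj)
  have hcb : ∀ j ∈ A', cBF n m (Tuple.sort (fun k => vt (Equiv.swap j p k))) (tauF n m α (Tuple.sort (fun k => vt (Equiv.swap j p k)))) = cBF n m (Tuple.sort (fun k => vt (Equiv.swap j₀ p k))) (tauF n m α (Tuple.sort (fun k => vt (Equiv.swap j₀ p k)))) := by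
    intro j hj
    obtain ⟨hjC, hjy, hjq⟩ := hmemA' j hj
    have h1 := hcount j hjC hjy (tauF n m α (Tuple.sort (fun k => vt (Equiv.swap j₀ p k))))
    have h2 := hcount j₀ hj₀C hj₀y (tauF n m α (Tuple.sort (fun k => vt (Equiv.swap j₀ p k))))
    have hje := hτeq j hj
    rw [if_pos (by omega)] at h1
    rw [if_pos hj₀q] at h2
    rw [hje]
    omega
  have hsum2 : ∑ j ∈ A', val j = A'.card •
      ENNReal.ofReal (((n : ℝ) + 1) / (1 + (cBF n m (Tuple.sort (fun k => vt (Equiv.swap j₀ p k))) (tauF n m α (Tuple.sort (fun k => vt (Equiv.swap j₀ p k)))) : ℝ))) := by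
    rw [← Finset.sum_const]
    apply Finset.sum_congr rfl
    intro j hj
    obtain ⟨hjC, hjy, hjq⟩ := hmemA' j hj
    rw [show val j = if (v j).2 ≤ 0 ∧ ρ (vt j) < tauF n m α (Tuple.sort (fun k => vt (Equiv.swap j p k))) then
      ENNReal.ofReal (((n : ℝ) + 1) / (1 + (cBF n m (Tuple.sort (fun k => vt (Equiv.swap j p k))) (tauF n m α (Tuple.sort (fun k => vt (Equiv.swap j p k)))) : ℝ))) else 0 from rfl]
    rw [if_pos ⟨hjy, hjq⟩, hcb j hj]
  rw [hsum2]
  have hτh_le : tauF n m α (Tuple.sort (fun k => vt (Equiv.swap j₀ p k))) ≤ n + m := tauF_le n m α (Tuple.sort (fun k => vt (Equiv.swap j₀ p k)))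
  have hj₀count := hcount j₀ hj₀C hj₀y (tauF n m α (Tuple.sort (fun k => vt (Equiv.swap j₀ p k))))
  rw [if_pos hj₀q] at hj₀count
  have hmin : min (tauF n m α (Tuple.sort (fun k => vt (Equiv.swap j₀ p k)))) (n + m) = tauF n m α (Tuple.sort (fun k => vt (Equiv.swap j₀ p k))) := min_eq_left hτh_le
  rw [hmin] at hj₀count
  have hcard : A'.card ≤ 1 + cBF n m (Tuple.sort (fun k => vt (Equiv.swap j₀ p k))) (tauF n m α (Tuple.sort (fun k => vt (Equiv.swap j₀ p k)))) := by
    have hsub : ∀ j ∈ A', ρ (vt j) ∈ Finset.range (tauF n m α (Tuple.sort (fun k => vt (Equiv.swap j₀ p k)))) \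
        ((Finset.univ.filter fun k : Fin (n + m) =>
          ¬ ((k : ℕ) < n ∨ k = p) ∧ ρ (vt k) < tauF n m α (Tuple.sort (fun k => vt (Equiv.swap j₀ p k)))).image fun k => ρ (vt k)) := by
      intro j hj
      obtain ⟨hjC, hjy, hjq⟩ := hmemA' j hj
      have hjC' : (j : ℕ) < n ∨ j = p := by rw [hC] at hjC; simpa using hjC
      have hje := hτeq j hj
      rw [Finset.mem_sdiff, Finset.mem_range]
      refine ⟨by omega, ?_⟩
      intro hmem
      obtain ⟨k, hk, heq⟩ := Finset.mem_image.mp hmem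
      have hknp : ¬ ((k : ℕ) < n ∨ k = p) := (Finset.mem_filter.mp hk).2.1
      have hkj : k ≠ j := by
        intro h
        rw [h] at hknp
        exact hknp hjC'
      exact hρinj k j hkj (hvtne_top' k hknp) (hvtne_top j hjy) heq
    have hinj : Set.InjOn (fun j => ρ (vt j)) A' := by
      intro a ha b hb hab
      by_contra hne
      exact hρinj a b hne (hvtne_top a (hmemA' a (Finset.mem_coe.mp ha)).2.1)
        (hvtne_top b (hmemA' b (Finset.mem_coe.mp hb)).2.1) hab
    have hA'le := Finset.card_le_card_of_injOn (fun j => ρ (vt j)) hsub hinj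
    have himgsub : ((Finset.univ.filter fun k : Fin (n + m) =>
        ¬ ((k : ℕ) < n ∨ k = p) ∧ ρ (vt k) < tauF n m α (Tuple.sort (fun k => vt (Equiv.swap j₀ p k)))).image fun k => ρ (vt k)) ⊆
        Finset.range (tauF n m α (Tuple.sort (fun k => vt (Equiv.swap j₀ p k)))) := by
      intro x hx
      obtain ⟨k, hk, rfl⟩ := Finset.mem_image.mp hx
      exact Finset.mem_range.mpr (Finset.mem_filter.mp hk).2.2
    have hcard_sdiff := Finset.card_sdiff_of_subset himgsub
    have himgcard : ((Finset.univ.filter fun k : Fin (n + m) =>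
        ¬ ((k : ℕ) < n ∨ k = p) ∧ ρ (vt k) < tauF n m α (Tuple.sort (fun k => vt (Equiv.swap j₀ p k)))).image fun k => ρ (vt k)).card
        = St (tauF n m α (Tuple.sort (fun k => vt (Equiv.swap j₀ p k)))) := by
      rw [show St (tauF n m α (Tuple.sort (fun k => vt (Equiv.swap j₀ p k)))) = (Finset.univ.filter fun k : Fin (n + m) =>
        ¬ ((k : ℕ) < n ∨ k = p) ∧ ρ (vt k) < tauF n m α (Tuple.sort (fun k => vt (Equiv.swap j₀ p k)))).card from rfl]
      apply Finset.card_image_of_injOn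
      intro a ha b hb hab
      by_contra hne
      exact hρinj a b hne (hvtne_top' a (Finset.mem_filter.mp (Finset.mem_coe.mp ha)).2.1)
        (hvtne_top' b (Finset.mem_filter.mp (Finset.mem_coe.mp hb)).2.1) hab
    rw [hcard_sdiff, Finset.card_range, himgcard] at hA'le
    omega
  rw [nsmul_eq_mul]
  have hxpos : (0:ℝ) < 1 + (cBF n m (Tuple.sort (fun k => vt (Equiv.swap j₀ p k))) (tauF n m α (Tuple.sort (fun k => vt (Equiv.swap j₀ p k)))) : ℝ) := by positivity
  calc (A'.card : ℝ≥0∞) * ENNReal.ofReal (((n : ℝ) + 1) /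
        (1 + (cBF n m (Tuple.sort (fun k => vt (Equiv.swap j₀ p k))) (tauF n m α (Tuple.sort (fun k => vt (Equiv.swap j₀ p k)))) : ℝ)))
      ≤ ((1 + cBF n m (Tuple.sort (fun k => vt (Equiv.swap j₀ p k))) (tauF n m α (Tuple.sort (fun k => vt (Equiv.swap j₀ p k)))) : ℕ) : ℝ≥0∞) * ENNReal.ofReal (((n : ℝ) + 1) /
        (1 + (cBF n m (Tuple.sort (fun k => vt (Equiv.swap j₀ p k))) (tauF n m α (Tuple.sort (fun k => vt (Equiv.swap j₀ p k)))) : ℝ))) := by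
        exact mul_le_mul_left (by exact_mod_cast hcard) _
    _ = ENNReal.ofReal (((1 + cBF n m (Tuple.sort (fun k => vt (Equiv.swap j₀ p k))) (tauF n m α (Tuple.sort (fun k => vt (Equiv.swap j₀ p k)))) : ℕ) : ℝ) * (((n : ℝ) + 1) /
        (1 + (cBF n m (Tuple.sort (fun k => vt (Equiv.swap j₀ p k))) (tauF n m α (Tuple.sort (fun k => vt (Equiv.swap j₀ p k)))) : ℝ)))) := by
        rw [← ENNReal.ofReal_natCast (1 + cBF n m (Tuple.sort (fun k => vt (Equiv.swap j₀ p k))) (tauF n m α (Tuple.sort (fun k => vt (Equiv.swap j₀ p k))))),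
          ← ENNReal.ofReal_mul (by positivity)]
    _ = ENNReal.ofReal ((n : ℝ) + 1) := by
        congr 1
        have hr1 : ((1 + cBF n m (Tuple.sort (fun k => vt (Equiv.swap j₀ p k))) (tauF n m α (Tuple.sort (fun k => vt (Equiv.swap j₀ p k)))) : ℕ) : ℝ)
            = 1 + (cBF n m (Tuple.sort (fun k => vt (Equiv.swap j₀ p k))) (tauF n m α (Tuple.sort (fun k => vt (Equiv.swap j₀ p k)))) : ℝ) := by push_cast; ring
        rw [hr1, ← mul_div_assoc, mul_div_cancel_left₀ _ (ne_of_gt hxpos)]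
    _ = (n : ℝ≥0∞) + 1 := by
        rw [ENNReal.ofReal_add (by positivity) zero_le_one, ENNReal.ofReal_natCast,
          ENNReal.ofReal_one]

end Det

section Meas

variable {𝓧 : Type*} [MeasurableSpace 𝓧] (n m : ℕ) (α : ℝ) (μhat : 𝓧 → ℝ)

lemma scoreF_measurable_apply (hμhat : Measurable μhat) (k : Fin (n + m)) :
    Measurable (fun v : Fin (n + m) → 𝓧 × ℝ => scoreF n m μhat v k) := by
  unfold scoreF
  have hbr : Measurable (fun v : Fin (n + m) → 𝓧 × ℝ => ((-μhat (v k).1 : ℝ) : EReal)) :=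
    measurable_coe_real_ereal.comp ((hμhat.comp ((measurable_pi_apply k).fst)).neg)
  by_cases hk : (k : ℕ) < n
  · have hset : MeasurableSet {v : Fin (n + m) → 𝓧 × ℝ | (k : ℕ) < n ∧ 0 < (v k).2} := by
      have hs2 : {v : Fin (n + m) → 𝓧 × ℝ | (k : ℕ) < n ∧ 0 < (v k).2}
          = {v : Fin (n + m) → 𝓧 × ℝ | 0 < (v k).2} := by
        ext v; simp [hk]
      rw [hs2]
      exact measurableSet_lt measurable_const ((measurable_pi_apply k).snd)
    exact Measurable.ite hset measurable_const hbr
  · have hset : (fun v : Fin (n + m) → 𝓧 × ℝ =>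
        if (k : ℕ) < n ∧ 0 < (v k).2 then (⊤ : EReal) else ((-μhat (v k).1 : ℝ) : EReal))
        = fun v => ((-μhat (v k).1 : ℝ) : EReal) := by
      funext v
      rw [if_neg (by tauto)]
    rw [hset]
    exact hbr

lemma sort_fiber_measurable (hμhat : Measurable μhat) (π : Equiv.Perm (Fin (n + m))) :
    MeasurableSet {v : Fin (n + m) → 𝓧 × ℝ | Tuple.sort (scoreF n m μhat v) = π} := by
  have hchar : {v : Fin (n + m) → 𝓧 × ℝ | Tuple.sort (scoreF n m μhat v) = π}
      = ⋂ (s : Fin (n + m)), ⋂ (s' : Fin (n + m)), ⋂ (_ : s < s'),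
        ({v : Fin (n + m) → 𝓧 × ℝ |
            scoreF n m μhat v (π s) < scoreF n m μhat v (π s')} ∪
         ({v : Fin (n + m) → 𝓧 × ℝ |
            scoreF n m μhat v (π s) = scoreF n m μhat v (π s')} ∩
          {v : Fin (n + m) → 𝓧 × ℝ | (π s : ℕ) < (π s' : ℕ)})) := by
    ext v
    simp only [Set.mem_setOf_eq, Set.mem_iInter, Set.mem_union, Set.mem_inter_iff]
    constructor
    · intro h s s' hss
      obtain ⟨hmon, htie⟩ := (Tuple.eq_sort_iff (f := scoreF n m μhat v) (σ := π)).mp h.symm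
      rcases (hmon hss.le).lt_or_eq with hlt | heq
      · exact Or.inl hlt
      · exact Or.inr ⟨heq, htie s s' hss heq⟩
    · intro h
      exact (sort_char (scoreF n m μhat v) (fun s s' hss => h s s' hss)).symm
  rw [hchar]
  refine MeasurableSet.iInter (fun s => MeasurableSet.iInter (fun s' =>
    MeasurableSet.iInter (fun _ => ?_)))
  have h1 := scoreF_measurable_apply n m μhat hμhat (π s)
  have h2 := scoreF_measurable_apply n m μhat hμhat (π s')
  refine (measurableSet_lt h1 h2).union (MeasurableSet.inter ?_ ?_)
  · have heqset : {v : Fin (n + m) → 𝓧 × ℝ |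
        scoreF n m μhat v (π s) = scoreF n m μhat v (π s')}
        = {v : Fin (n + m) → 𝓧 × ℝ | scoreF n m μhat v (π s) ≤ scoreF n m μhat v (π s')}
          ∩ {v : Fin (n + m) → 𝓧 × ℝ |
              scoreF n m μhat v (π s') ≤ scoreF n m μhat v (π s)} := by
      ext v; simp only [Set.mem_setOf_eq, Set.mem_inter_iff]; exact le_antisymm_iff
    rw [heqset]
    exact (measurableSet_le h1 h2).inter (measurableSet_le h2 h1)
  · by_cases hc : (π s : ℕ) < (π s' : ℕ)
    · have hu : {v : Fin (n + m) → 𝓧 × ℝ | (π s : ℕ) < (π s' : ℕ)} = Set.univ := by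
        ext v; simp [hc]
      rw [hu]; exact MeasurableSet.univ
    · have hu : {v : Fin (n + m) → 𝓧 × ℝ | (π s : ℕ) < (π s' : ℕ)} = ∅ := by
        ext v; simp [hc]
      rw [hu]; exact MeasurableSet.empty

lemma gFP_measurable (hμhat : Measurable μhat) (p : Fin (n + m))
    (π : Equiv.Perm (Fin (n + m))) : Measurable (gFP n m α μhat p π) := by
  unfold gFP
  apply ENNReal.measurable_ofReal.comp
  have hind2 : Measurable (fun v : Fin (n + m) → 𝓧 × ℝ =>
      (if (v p).2 ≤ 0 then (1:ℝ) else 0)) := by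
    refine Measurable.ite ?_ measurable_const measurable_const
    exact measurableSet_le ((measurable_pi_apply p).snd) measurable_const
  refine Measurable.mul ?_ hind2
  apply Measurable.div_const
  apply Measurable.const_mul
  have hWs : Measurable (fun v : Fin (n + m) → 𝓧 × ℝ =>
      WsF n m (scoreF n m μhat v) π (tauF n m α π)) := by
    unfold WsF
    by_cases hcond : tauF n m α π - 1 < n + m ∧ 1 ≤ tauF n m α π
    · simp only [dif_pos hcond]
      exact scoreF_measurable_apply n m μhat hμhat _
    · simp only [dif_neg hcond]
      exact measurable_const
  refine Measurable.ite ?_ measurable_const measurable_const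
  exact measurableSet_le (scoreF_measurable_apply n m μhat hμhat p) hWs

lemma gF_measurable (hμhat : Measurable μhat) (p : Fin (n + m)) :
    Measurable (gF n m α μhat p) := by
  classical
  have hsum : gF n m α μhat p = fun v => ∑ π : Equiv.Perm (Fin (n + m)),
      Set.indicator {v' : Fin (n + m) → 𝓧 × ℝ | Tuple.sort (scoreF n m μhat v') = π}
        (gFP n m α μhat p π) v := by
    funext v
    rw [Finset.sum_eq_single (Tuple.sort (scoreF n m μhat v))]
    · rw [Set.indicator_of_mem (by exact rfl)]
      rfl
    · intro π _ hπ
      exact Set.indicator_of_notMem (fun h => hπ (by exact h.symm ▸ rfl)) _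
    · intro habs
      exact absurd (Finset.mem_univ _) habs
  rw [hsum]
  exact Finset.measurable_sum _ (fun π _ =>
    (gFP_measurable n m α μhat hμhat p π).indicator
      (sort_fiber_measurable n m μhat hμhat π))

end Meas

end ConfAux

open ConfAux in
theorem stmt_1 {Ω 𝓩 𝓧 : Type*} [MeasureSpace Ω] [IsProbabilityMeasure (volume : Measure Ω)]
    [MeasurableSpace 𝓩] [MeasurableSpace 𝓧]
    (n m : ℕ) (hm : 1 ≤ m) (α : ℝ) (hα : α ∈ Set.Ioo (0 : ℝ) 1)
    (Z : ℕ → Ω → 𝓩) (X : ℕ → Ω → 𝓧) (Y : ℕ → Ω → ℝ)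
    (hmeas : ∀ i, Measurable fun ω => (Z i ω, X i ω, Y i ω))
    (hiid : iIndepFun
      (fun i : Fin (n + m) => fun ω => (Z i ω, X i ω, Y i ω)) volume)
    (hid : ∀ i j : Fin (n + m),
      Measure.map (fun ω => (Z (i : ℕ) ω, X (i : ℕ) ω, Y (i : ℕ) ω)) volume =
        Measure.map (fun ω => (Z (j : ℕ) ω, X (j : ℕ) ω, Y (j : ℕ) ω)) volume)
    (μhat : 𝓧 → ℝ) (hμhat : Measurable μhat)
    (hdistinct : ∀ᵐ ω ∂volume, ∀ i j : Fin (n + m), i ≠ j →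
      μhat (X (i : ℕ) ω) ≠ μhat (X (j : ℕ) ω))
    (W : ℕ → Ω → EReal)
    (hWcal : ∀ i < n, ∀ ω, W i ω =
      if 0 < Y i ω then (⊤ : EReal) else ((-μhat (X i ω) : ℝ) : EReal))
    (hWtest : ∀ i < m, ∀ ω, W (n + i) ω = ((-μhat (X (n + i) ω) : ℝ) : EReal))
    (πsort : Ω → Equiv.Perm (Fin (n + m)))
    (hπmeas : ∀ s, Measurable fun ω => πsort ω s)
    (hsort : ∀ ω, ∀ s s' : Fin (n + m), s < s' →
      W (πsort ω s : ℕ) ω < W (πsort ω s' : ℕ) ω ∨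
        (W (πsort ω s : ℕ) ω = W (πsort ω s' : ℕ) ω ∧ (πsort ω s : ℕ) < (πsort ω s' : ℕ)))
    (Wsorted : ℕ → Ω → EReal)
    (hWsorted0 : ∀ ω, Wsorted 0 ω = ⊥)
    (hWsorted : ∀ t : ℕ, ∀ h : t < n + m, ∀ ω, Wsorted (t + 1) ω = W (πsort ω ⟨t, h⟩ : ℕ) ω)
    (cB : ℕ → Ω → ℕ)
    (hcB : ∀ t ω, cB t ω =
      (Finset.univ.filter fun s : Fin (n + m) =>
        (s : ℕ) < t ∧ (πsort ω s : ℕ) < n).card)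
    (Ncal : ℕ → Ω → ℕ)
    (hNcal : ∀ t ω, Ncal t ω =
      (Finset.univ.filter fun s : Fin (n + m) =>
        t ≤ (s : ℕ) ∧ (πsort ω s : ℕ) < n).card)
    (F : ℕ → MeasurableSpace Ω)
    (hF : ∀ t, F t = MeasurableSpace.comap
      (fun ω => fun s : Fin (n + m) =>
        ((if t ≤ (s : ℕ) then (if (πsort ω s : ℕ) < n then (1 : ℕ) else 0) else 0),
          Z (πsort ω s : ℕ) ω)) inferInstance)
    (τBH : Ω → ℕ)
    (hτBH : ∀ ω, τBH ω = sSup {t : ℕ | 1 ≤ t ∧ t ≤ n + m ∧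
      (m : ℝ) / ((n : ℝ) + 1) * (1 + (cB t ω : ℝ)) / max 1 ((t : ℝ) - (cB t ω : ℝ)) ≤ α})
    (evals : ℕ → Ω → ℝ)
    (heval : ∀ i ω, evals i ω =
      ((n : ℝ) + 1) * (if W (n + i) ω ≤ Wsorted (τBH ω) ω then 1 else 0) /
        (1 + (n : ℝ) - (Ncal (τBH ω) ω : ℝ))) :
    (∀ t, MeasurableSet[F t] {ω | t ≤ τBH ω}) ∧
    (∀ i < m,
      ∫⁻ ω, ENNReal.ofReal (evals i ω * (if Y (n + i) ω ≤ 0 then 1 else 0)) ∂volume ≤ 1) := by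
  classical
  have hcBF : ∀ t ω, ConfAux.cBF n m (πsort ω) t = cB t ω := by
    intro t ω; rw [hcB t ω]; rfl
  have hNF : ∀ t ω, ConfAux.NcalF n m (πsort ω) t = Ncal t ω := by
    intro t ω; rw [hNcal t ω]; rfl
  have hcBN : ∀ t ω, cB t ω + Ncal t ω = n := by
    intro t ω
    rw [← hcBF t ω, ← hNF t ω]
    exact cBF_add_NcalF n m (πsort ω) t hm
  have hτeqF : ∀ ω, ConfAux.tauF n m α (πsort ω) = τBH ω := by
    intro ω
    rw [hτBH ω]
    unfold ConfAux.tauF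
    congr 1
    ext t
    simp only [Set.mem_setOf_eq]
    rw [hcBF t ω]
  have hτle : ∀ ω, τBH ω ≤ n + m := by
    intro ω
    rw [← hτeqF ω]
    exact tauF_le n m α (πsort ω)
  constructor
  · -- Part 1 : stopping time property
    intro t
    rcases Nat.eq_zero_or_pos t with ht0 | ht1
    · subst ht0
      have huniv : {ω : Ω | 0 ≤ τBH ω} = Set.univ := by
        ext ω; simp
      rw [huniv]
      exact MeasurableSet.univ
    rw [hF t]
    have hset : {ω : Ω | t ≤ τBH ω} = ⋃ t' ∈ Finset.Icc t (n + m), {ω : Ω |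
        (m : ℝ) / ((n : ℝ) + 1) * (1 + (cB t' ω : ℝ)) /
          max 1 ((t' : ℝ) - (cB t' ω : ℝ)) ≤ α} := by
      ext ω
      simp only [Set.mem_setOf_eq, Set.mem_iUnion, Finset.mem_Icc, exists_prop]
      rw [hτBH ω]
      constructor
      · intro h
        have hne : {t : ℕ | 1 ≤ t ∧ t ≤ n + m ∧ (m : ℝ) / ((n : ℝ) + 1) * (1 + (cB t ω : ℝ))
            / max 1 ((t : ℝ) - (cB t ω : ℝ)) ≤ α}.Nonempty := by
          by_contra hc
          rw [Set.not_nonempty_iff_eq_empty] at hc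
          rw [hc] at h
          simp at h
          omega
        have hmem := Nat.sSup_mem hne ⟨n + m, fun x hx => hx.2.1⟩
        exact ⟨_, ⟨h, hmem.2.1⟩, hmem.2.2⟩
      · rintro ⟨t', ⟨h1, h2⟩, h3⟩
        have hsup := le_csSup (⟨n + m, fun x hx => hx.2.1⟩ : BddAbove {t : ℕ | 1 ≤ t ∧
          t ≤ n + m ∧ (m : ℝ) / ((n : ℝ) + 1) * (1 + (cB t ω : ℝ))
            / max 1 ((t : ℝ) - (cB t ω : ℝ)) ≤ α}) (show t' ∈ _ from ⟨by omega, h2, h3⟩)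
        omega
    rw [hset]
    apply Finset.measurableSet_biUnion
    intro t' ht'
    rw [Finset.mem_Icc] at ht'
    set count : (Fin (n + m) → ℕ × 𝓩) → ℕ := fun u =>
      (Finset.univ.filter fun s : Fin (n + m) => t' ≤ (s : ℕ) ∧ (u s).1 = 1).card
      with hcountdef
    have hcountmeas : Measurable count := by
      have hrw : count = fun u : Fin (n + m) → ℕ × 𝓩 =>
          ∑ s : Fin (n + m), if t' ≤ (s : ℕ) ∧ (u s).1 = 1 then 1 else 0 := by
        funext u
        rw [show count u = (Finset.univ.filter fun s : Fin (n + m) =>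
          t' ≤ (s : ℕ) ∧ (u s).1 = 1).card from rfl, Finset.card_filter]
      rw [hrw]
      apply Finset.measurable_sum
      intro s _
      refine Measurable.ite ?_ measurable_const measurable_const
      by_cases hs : t' ≤ (s : ℕ)
      · have hseq : {u : Fin (n + m) → ℕ × 𝓩 | t' ≤ (s : ℕ) ∧ (u s).1 = 1}
            = (fun u : Fin (n + m) → ℕ × 𝓩 => (u s).1) ⁻¹' {1} := by
          ext u; simp [hs]
        rw [hseq]
        exact ((measurable_pi_apply s).fst) (measurableSet_singleton 1)
      · have hseq : {u : Fin (n + m) → ℕ × 𝓩 | t' ≤ (s : ℕ) ∧ (u s).1 = 1} = ∅ := by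
          ext u; simp [hs]
        rw [hseq]
        exact MeasurableSet.empty
    rw [MeasurableSpace.measurableSet_comap]
    refine ⟨count ⁻¹' {c : ℕ | (m : ℝ) / ((n : ℝ) + 1) * (1 + ((n - c : ℕ) : ℝ)) /
        max 1 ((t' : ℝ) - ((n - c : ℕ) : ℝ)) ≤ α},
      hcountmeas ((Set.to_countable _).measurableSet), ?_⟩
    ext ω
    simp only [Set.mem_preimage, Set.mem_setOf_eq]
    have hcnt : count (fun s : Fin (n + m) =>
        ((if t ≤ (s : ℕ) then (if (πsort ω s : ℕ) < n then (1 : ℕ) else 0) else 0),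
          Z (πsort ω s : ℕ) ω)) = Ncal t' ω := by
      rw [hNcal t' ω]
      rw [show count (fun s : Fin (n + m) =>
        ((if t ≤ (s : ℕ) then (if (πsort ω s : ℕ) < n then (1 : ℕ) else 0) else 0),
          Z (πsort ω s : ℕ) ω)) = (Finset.univ.filter fun s : Fin (n + m) =>
        t' ≤ (s : ℕ) ∧ ((if t ≤ (s : ℕ) then (if (πsort ω s : ℕ) < n then (1 : ℕ) else 0)
          else 0) = 1)).card from rfl]
      congr 1
      apply Finset.filter_congr
      intro s _
      by_cases hs : t' ≤ (s : ℕ)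
      · simp only [hs, true_and]
        rw [if_pos (by omega)]
        by_cases hπ : (πsort ω s : ℕ) < n
        · simp [hπ]
        · simp [hπ]
      · simp [hs]
    rw [hcnt]
    have hsub : (n - Ncal t' ω : ℕ) = cB t' ω := by
      have := hcBN t' ω; omega
    rw [hsub]
  · -- Part 2 : e-value property
    intro i hi
    have hpi : n + i < n + m := by omega
    set p : Fin (n + m) := ⟨n + i, hpi⟩ with hpdef
    set vec : Ω → (Fin (n + m) → 𝓧 × ℝ) :=
      fun ω => fun k : Fin (n + m) => (X (k : ℕ) ω, Y (k : ℕ) ω) with hvecdef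
    have hpair : ∀ k : Fin (n + m), Measurable (fun ω => (X (k : ℕ) ω, Y (k : ℕ) ω)) :=
      fun k => measurable_snd.comp (hmeas (k : ℕ))
    have hvec : Measurable vec := measurable_pi_lambda _ (fun k => hpair k)
    have hq0 : (0 : ℕ) < n + m := by omega
    set q0 : Fin (n + m) := ⟨0, hq0⟩ with hq0def
    set ν : Measure (𝓧 × ℝ) :=
      Measure.map (fun ω => (X (q0 : ℕ) ω, Y (q0 : ℕ) ω)) volume with hνdef
    have hiidp : iIndepFun
        (fun k : Fin (n + m) => fun ω => (X (k : ℕ) ω, Y (k : ℕ) ω)) volume := by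
      have h := hiid.comp (fun _ => Prod.snd) (fun _ => measurable_snd)
      exact h
    have hmap_pair : ∀ k : Fin (n + m),
        Measure.map (fun ω => (X (k : ℕ) ω, Y (k : ℕ) ω)) volume = ν := by
      intro k
      have h1 : (fun ω => (X (k : ℕ) ω, Y (k : ℕ) ω))
          = Prod.snd ∘ (fun ω => (Z (k : ℕ) ω, X (k : ℕ) ω, Y (k : ℕ) ω)) := rfl
      have h2 : (fun ω => (X (q0 : ℕ) ω, Y (q0 : ℕ) ω))
          = Prod.snd ∘ (fun ω => (Z (q0 : ℕ) ω, X (q0 : ℕ) ω, Y (q0 : ℕ) ω)) := rfl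
      rw [hνdef, h1, h2, ← Measure.map_map measurable_snd (hmeas (k : ℕ)),
        ← Measure.map_map measurable_snd (hmeas (q0 : ℕ)), hid k q0]
    haveI hνprob : IsProbabilityMeasure ν := by
      rw [hνdef]; exact Measure.isProbabilityMeasure_map (hpair q0).aemeasurable
    have hlaw : Measure.map vec volume = Measure.pi (fun _ : Fin (n + m) => ν) := by
      refine (Measure.pi_eq fun s hs => ?_).symm
      rw [Measure.map_apply hvec (MeasurableSet.univ_pi hs)]
      have hpre : vec ⁻¹' (Set.pi Set.univ s) = ⋂ k ∈ (Finset.univ : Finset (Fin (n + m))),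
          (fun ω => (X (k : ℕ) ω, Y (k : ℕ) ω)) ⁻¹' (s k) := by
        ext ω
        simp [Set.mem_pi]
        exact Iff.rfl
      rw [hpre, hiidp.measure_inter_preimage_eq_mul Finset.univ (fun k _ => hs k)]
      refine Finset.prod_congr rfl (fun k _ => ?_)
      rw [← Measure.map_apply (hpair k) (hs k), hmap_pair k]
    -- bridge : the integrand is gF composed with vec
    have hbridge : ∀ ω, ENNReal.ofReal (evals i ω * (if Y (n + i) ω ≤ 0 then 1 else 0))
        = ConfAux.gF n m α μhat p (vec ω) := by
      intro ω
      have hw : ConfAux.scoreF n m μhat (vec ω) = fun k : Fin (n + m) => W (k : ℕ) ω := by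
        funext k
        show (if (k : ℕ) < n ∧ 0 < Y (k : ℕ) ω then (⊤ : EReal)
          else ((-μhat (X (k : ℕ) ω) : ℝ) : EReal)) = W (k : ℕ) ω
        by_cases hk : (k : ℕ) < n
        · rw [hWcal (k : ℕ) hk ω]
          by_cases hy : 0 < Y (k : ℕ) ω
          · rw [if_pos ⟨hk, hy⟩, if_pos hy]
          · rw [if_neg (by tauto), if_neg hy]
        · have hk2 : (k : ℕ) - n < m := by omega
          have hk3 : n + ((k : ℕ) - n) = (k : ℕ) := by omega
          rw [if_neg (by tauto)]
          have hWt := hWtest ((k : ℕ) - n) hk2 ω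
          rw [hk3] at hWt
          rw [hWt]
      have hπeq : Tuple.sort (ConfAux.scoreF n m μhat (vec ω)) = πsort ω := by
        rw [hw]
        exact (ConfAux.sort_char (fun k : Fin (n + m) => W (k : ℕ) ω)
          (fun s s' hss => hsort ω s s' hss)).symm
      have hWs : ConfAux.WsF n m (fun k : Fin (n + m) => W (k : ℕ) ω) (πsort ω) (τBH ω)
          = Wsorted (τBH ω) ω := by
        rcases Nat.eq_zero_or_pos (τBH ω) with h0 | h1
        · rw [h0]
          unfold ConfAux.WsF
          rw [dif_neg (by omega), hWsorted0 ω]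
        · unfold ConfAux.WsF
          have hcond : τBH ω - 1 < n + m ∧ 1 ≤ τBH ω := ⟨by have := hτle ω; omega, h1⟩
          rw [dif_pos hcond]
          have hWss := hWsorted (τBH ω - 1) hcond.1 ω
          rw [show τBH ω - 1 + 1 = τBH ω from by omega] at hWss
          rw [hWss]
      rw [heval i ω]
      unfold ConfAux.gF ConfAux.gFP
      rw [hπeq, hτeqF ω, hw, hWs, hNF (τBH ω) ω]
    have hgF : Measurable (ConfAux.gF n m α μhat p) := gF_measurable n m α μhat hμhat p
    have hIeq : ∫⁻ ω, ENNReal.ofReal (evals i ω * (if Y (n + i) ω ≤ 0 then 1 else 0)) ∂volume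
        = ∫⁻ v, ConfAux.gF n m α μhat p v ∂(Measure.pi fun _ : Fin (n + m) => ν) := by
      rw [lintegral_congr hbridge, ← hlaw, lintegral_map hgF hvec]
    rw [hIeq]
    -- swap invariance
    have hswap : ∀ j : Fin (n + m),
        ∫⁻ v, ConfAux.gF n m α μhat p (v ∘ Equiv.swap j p)
          ∂(Measure.pi fun _ : Fin (n + m) => ν)
        = ∫⁻ v, ConfAux.gF n m α μhat p v ∂(Measure.pi fun _ : Fin (n + m) => ν) := by
      intro j
      have hmp := MeasureTheory.measurePreserving_piCongrLeft
        (fun _ : Fin (n + m) => ν) (Equiv.swap j p).symm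
      have hcoe : ∀ u : Fin (n + m) → 𝓧 × ℝ,
          (MeasurableEquiv.piCongrLeft (fun _ : Fin (n + m) => 𝓧 × ℝ)
            (Equiv.swap j p).symm) u = u ∘ (Equiv.swap j p) := by
        intro u
        funext k
        rw [MeasurableEquiv.coe_piCongrLeft]
        have h2 := Equiv.piCongrLeft_apply_apply (fun _ : Fin (n + m) => 𝓧 × ℝ)
          (Equiv.swap j p).symm u ((Equiv.swap j p) k)
        simpa using h2
      rw [← hmp.lintegral_comp hgF]
      apply lintegral_congr
      intro u
      rw [hcoe u]
    -- a.e. distinctness on the product space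
    have hDmeas : MeasurableSet {v : Fin (n + m) → 𝓧 × ℝ |
        ∀ k k' : Fin (n + m), k ≠ k' → μhat (v k).1 ≠ μhat (v k').1} := by
      have hch : {v : Fin (n + m) → 𝓧 × ℝ |
          ∀ k k' : Fin (n + m), k ≠ k' → μhat (v k).1 ≠ μhat (v k').1}
          = ⋂ (k : Fin (n + m)), ⋂ (k' : Fin (n + m)), ⋂ (_ : k ≠ k'),
            ({v : Fin (n + m) → 𝓧 × ℝ | μhat (v k).1 = μhat (v k').1})ᶜ := by
        ext v
        simp only [Set.mem_setOf_eq, Set.mem_iInter, Set.mem_compl_iff]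
      rw [hch]
      refine MeasurableSet.iInter (fun k => MeasurableSet.iInter (fun k' =>
        MeasurableSet.iInter (fun _ => MeasurableSet.compl ?_)))
      have h1 : Measurable (fun v : Fin (n + m) → 𝓧 × ℝ => μhat (v k).1) :=
        hμhat.comp ((measurable_pi_apply k).fst)
      have h2 : Measurable (fun v : Fin (n + m) → 𝓧 × ℝ => μhat (v k').1) :=
        hμhat.comp ((measurable_pi_apply k').fst)
      have heqs : {v : Fin (n + m) → 𝓧 × ℝ | μhat (v k).1 = μhat (v k').1}
          = {v : Fin (n + m) → 𝓧 × ℝ | μhat (v k).1 ≤ μhat (v k').1}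
            ∩ {v : Fin (n + m) → 𝓧 × ℝ | μhat (v k').1 ≤ μhat (v k).1} := by
        ext v; simp only [Set.mem_setOf_eq, Set.mem_inter_iff]; exact le_antisymm_iff
      rw [heqs]
      exact (measurableSet_le h1 h2).inter (measurableSet_le h2 h1)
    have hae : ∀ᵐ v ∂(Measure.pi fun _ : Fin (n + m) => ν),
        ∀ k k' : Fin (n + m), k ≠ k' → μhat (v k).1 ≠ μhat (v k').1 := by
      rw [← hlaw]
      have hmem : ∀ᵐ ω ∂(volume : Measure Ω), vec ω ∈ {v : Fin (n + m) → 𝓧 × ℝ |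
          ∀ k k' : Fin (n + m), k ≠ k' → μhat (v k).1 ≠ μhat (v k').1} := by
        filter_upwards [hdistinct] with ω h
        exact fun k k' hkk => h k k' hkk
      exact (MeasureTheory.ae_map_iff hvec.aemeasurable hDmeas).mpr hmem
    have hptwise : ∀ᵐ v ∂(Measure.pi fun _ : Fin (n + m) => ν),
        ∑ j ∈ Finset.univ.filter (fun k : Fin (n + m) => (k : ℕ) < n ∨ k = p),
          ConfAux.gF n m α μhat p (v ∘ Equiv.swap j p) ≤ ((n : ℝ≥0∞) + 1) := by
      filter_upwards [hae] with v hdv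
      exact det_core n m α μhat hm v hdv p (by show n ≤ n + i; omega)
    have hCcard : (Finset.univ.filter (fun k : Fin (n + m) =>
        (k : ℕ) < n ∨ k = p)).card = n + 1 := by
      have hins : Finset.univ.filter (fun k : Fin (n + m) => (k : ℕ) < n ∨ k = p)
          = insert p (Finset.univ.filter (fun k : Fin (n + m) => (k : ℕ) < n)) := by
        ext k
        simp only [Finset.mem_filter, Finset.mem_univ, true_and, Finset.mem_insert]
        tauto
      rw [hins, Finset.card_insert_of_notMem (by
        simp only [Finset.mem_filter, Finset.mem_univ, true_and]
        show ¬ (n + i < n); omega)]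
      rw [ConfAux.card_filter_val_lt]
      omega
    have hcomp : ∀ j : Fin (n + m), Measurable (fun v : Fin (n + m) → 𝓧 × ℝ =>
        ConfAux.gF n m α μhat p (v ∘ Equiv.swap j p)) := by
      intro j
      exact hgF.comp (measurable_pi_lambda _ (fun k => measurable_pi_apply _))
    have hkey : ((n : ℝ≥0∞) + 1) * (∫⁻ v, ConfAux.gF n m α μhat p v
        ∂(Measure.pi fun _ : Fin (n + m) => ν)) ≤ ((n : ℝ≥0∞) + 1) * 1 := by
      rw [mul_one]
      calc ((n : ℝ≥0∞) + 1) * (∫⁻ v, ConfAux.gF n m α μhat p v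
            ∂(Measure.pi fun _ : Fin (n + m) => ν))
          = ∑ j ∈ Finset.univ.filter (fun k : Fin (n + m) => (k : ℕ) < n ∨ k = p),
            ∫⁻ v, ConfAux.gF n m α μhat p (v ∘ Equiv.swap j p)
              ∂(Measure.pi fun _ : Fin (n + m) => ν) := by
            rw [Finset.sum_congr rfl (fun j _ => hswap j), Finset.sum_const, hCcard,
              nsmul_eq_mul]
            push_cast
            ring
        _ = ∫⁻ v, ∑ j ∈ Finset.univ.filter (fun k : Fin (n + m) => (k : ℕ) < n ∨ k = p),
            ConfAux.gF n m α μhat p (v ∘ Equiv.swap j p)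
              ∂(Measure.pi fun _ : Fin (n + m) => ν) := by
            rw [lintegral_finset_sum _ (fun j _ => hcomp j)]
        _ ≤ ∫⁻ _, ((n : ℝ≥0∞) + 1) ∂(Measure.pi fun _ : Fin (n + m) => ν) :=
            lintegral_mono_ae hptwise
        _ = ((n : ℝ≥0∞) + 1) := by
            rw [lintegral_const, measure_univ, mul_one]
    have hne0 : ((n : ℝ≥0∞) + 1) ≠ 0 := by simp
    have hnetop : ((n : ℝ≥0∞) + 1) ≠ ⊤ := by
      simp [ENNReal.natCast_ne_top]
    exact (ENNReal.mul_le_mul_iff_right hne0 hnetop).mp hkey
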